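/- For every integer n ≥ 1, the joint distributions agree: Σ_{σ ∈ 𝒬_n} x^{asc(σ)} y^{bkone(σ)} q^{bk(σ)} p^{fbk(σ)} = Σ_{σ ∈ 𝒬̂_n} x^{exc(σ)} y^{fix(σ)} q^{cyc(σ)} p^{fcyc(σ)}, as an identity of polynomials in the four variables x, y, q, p. -/

import Mathlib

open Finset

/-- The number of ascents of a permutation of `{1, …, m+1}`. -/
def asc {m : ℕ} (π : Equiv.Perm (Fin (m + 1))) : ℕ :=
  (Finset.univ.filter fun i : Fin m => π i.castSucc < π i.succ).card

/-- The set `𝒬_{m+1}` of permutations of `{1, …, m+1}` whose largest entry appears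
as the first descent (the identity permutation is included). -/
def Qset (m : ℕ) : Finset (Equiv.Perm (Fin (m + 1))) :=
  Finset.univ.filter fun π =>
    ∀ i : Fin m, i.succ ≤ π⁻¹ (Fin.last m) → π i.castSucc < π i.succ

/-- Position `i` carries a right-to-left maximum of `π`. -/
def isRLMax {m : ℕ} (π : Equiv.Perm (Fin (m + 1))) (i : Fin (m + 1)) : Prop :=
  ∀ j, i < j → π j < π i

instance {m : ℕ} (π : Equiv.Perm (Fin (m + 1))) (i : Fin (m + 1)) :
    Decidable (isRLMax π i) := by unfold isRLMax; infer_instance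

/-- `bk(π)`: the number of blocks of `π`, i.e. the number of right-to-left maxima. -/
def bk {m : ℕ} (π : Equiv.Perm (Fin (m + 1))) : ℕ :=
  (Finset.univ.filter fun i => isRLMax π i).card

/-- `bkone(π)`: the number of blocks of length one, i.e. positions `i` carrying a
right-to-left maximum such that `i` is the first position or position `i - 1` also
carries a right-to-left maximum. -/
def bkone {m : ℕ} (π : Equiv.Perm (Fin (m + 1))) : ℕ :=
  (Finset.univ.filter fun i : Fin (m + 1) => isRLMax π i ∧
    ((i : ℕ) = 0 ∨ isRLMax π ⟨(i : ℕ) - 1, lt_of_le_of_lt (Nat.sub_le _ _) i.isLt⟩)).card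

/-- `fbk(π)`: the length of the first block, i.e. the (`1`-indexed) position of the
leftmost right-to-left maximum. -/
def fbk {m : ℕ} (π : Equiv.Perm (Fin (m + 1))) : ℕ :=
  (Finset.univ.filter fun j : Fin (m + 1) => ∀ i ≤ j, ¬ isRLMax π i).card + 1

/-- `𝒬̂_{m+1}`: permutations `σ` of `{1, …, m+1}` such that every element `x` other
than the largest element in the cycle of `σ` containing the largest element
satisfies `σ(x) > x`. -/
noncomputable def Qhat (m : ℕ) : Finset (Equiv.Perm (Fin (m + 1))) :=
  Finset.univ.filter fun σ =>
    ∀ x, σ.SameCycle x (Fin.last m) → x ≠ Fin.last m → x < σ x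

/-- `exc(σ)`: the number of excedances of `σ`. -/
def exc {n : ℕ} (σ : Equiv.Perm (Fin n)) : ℕ :=
  (Finset.univ.filter fun i => i < σ i).card

/-- `fixp(σ)`: the number of fixed points of `σ`. -/
def fixp {n : ℕ} (σ : Equiv.Perm (Fin n)) : ℕ :=
  (Finset.univ.filter fun i => σ i = i).card

/-- `cyc(σ)`: the number of cycles of `σ`, fixed points counted. -/
def cyc {n : ℕ} (σ : Equiv.Perm (Fin n)) : ℕ :=
  σ.cycleType.card + fixp σ

/-- `fcyc(σ)`: the number of elements of the cycle of `σ` containing the largest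
element. -/
noncomputable def fcyc {m : ℕ} (σ : Equiv.Perm (Fin (m + 1))) : ℕ :=
  (Finset.univ.filter fun x => σ.SameCycle x (Fin.last m)).card

namespace JDaux

variable {m : ℕ}

theorem rl_last (π : Equiv.Perm (Fin (m+1))) : isRLMax π (Fin.last m) :=
  fun j hj => absurd (Fin.le_last j) (not_le.mpr hj)

/-- end of the block containing `i`: the least RL-max position `≥ i`. -/
def bE (π : Equiv.Perm (Fin (m+1))) (i : Fin (m+1)) : Fin (m+1) :=
  (Finset.univ.filter fun j => i ≤ j ∧ isRLMax π j).min'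
    ⟨Fin.last m, by simp [rl_last, Fin.le_last]⟩

theorem bE_spec (π : Equiv.Perm (Fin (m+1))) (i : Fin (m+1)) :
    i ≤ bE π i ∧ isRLMax π (bE π i) := by
  have h := Finset.min'_mem (Finset.univ.filter fun j => i ≤ j ∧ isRLMax π j)
    ⟨Fin.last m, by simp [rl_last, Fin.le_last]⟩
  simpa [bE, Finset.mem_filter] using h

theorem le_bE (π : Equiv.Perm (Fin (m+1))) (i : Fin (m+1)) : i ≤ bE π i := (bE_spec π i).1

theorem rl_bE (π : Equiv.Perm (Fin (m+1))) (i : Fin (m+1)) : isRLMax π (bE π i) := (bE_spec π i).2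

theorem bE_min {π : Equiv.Perm (Fin (m+1))} {i j : Fin (m+1)} (hij : i ≤ j)
    (hj : isRLMax π j) : bE π i ≤ j :=
  Finset.min'_le _ _ (by simp [hij, hj])

theorem bE_eq_self {π : Equiv.Perm (Fin (m+1))} {i : Fin (m+1)} (h : isRLMax π i) :
    bE π i = i :=
  le_antisymm (bE_min le_rfl h) (le_bE π i)

theorem not_rl_of_lt_bE {π : Equiv.Perm (Fin (m+1))} {i j : Fin (m+1)} (hij : i ≤ j)
    (hj : j < bE π i) : ¬ isRLMax π j :=
  fun h => absurd (bE_min hij h) (not_le.mpr hj)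

theorem bE_mono {π : Equiv.Perm (Fin (m+1))} {i j : Fin (m+1)} (hij : i ≤ j) :
    bE π i ≤ bE π j :=
  bE_min (le_trans hij (le_bE π j)) (rl_bE π j)

theorem bE_of_between {π : Equiv.Perm (Fin (m+1))} {i j : Fin (m+1)} (hij : i ≤ j)
    (hj : j ≤ bE π i) : bE π j = bE π i :=
  le_antisymm (bE_min hj (rl_bE π i)) (bE_mono hij)

/-- start of the block containing `i`. -/
def sB (π : Equiv.Perm (Fin (m+1))) (i : Fin (m+1)) : Fin (m+1) :=
  (Finset.univ.filter fun j => bE π j = bE π i).min' ⟨i, by simp⟩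

theorem sB_le (π : Equiv.Perm (Fin (m+1))) (i : Fin (m+1)) : sB π i ≤ i := by
  exact Finset.min'_le _ _ (by simp)

theorem bE_sB (π : Equiv.Perm (Fin (m+1))) (i : Fin (m+1)) : bE π (sB π i) = bE π i := by
  have h := Finset.min'_mem (Finset.univ.filter fun j => bE π j = bE π i) ⟨i, by simp⟩
  simpa [sB, Finset.mem_filter] using h

theorem sB_min {π : Equiv.Perm (Fin (m+1))} {i j : Fin (m+1)} (h : bE π j = bE π i) :
    sB π i ≤ j :=
  Finset.min'_le _ _ (by simp [h])

theorem sB_eq_of_bE_eq {π : Equiv.Perm (Fin (m+1))} {i j : Fin (m+1)} (h : bE π j = bE π i) :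
    sB π j = sB π i := by
  unfold sB
  congr 1
  ext k
  simp [h]

theorem bE_of_between' {π : Equiv.Perm (Fin (m+1))} {i j : Fin (m+1)} (h1 : sB π i ≤ j)
    (h2 : j ≤ bE π i) : bE π j = bE π i := by
  rcases le_or_gt i j with h | h
  · exact bE_of_between h h2
  · rw [bE_of_between h1 (h2.trans (bE_sB π i).symm.le), bE_sB]

theorem sB_sub_one {π : Equiv.Perm (Fin (m+1))} (i : Fin (m+1)) :
    (sB π i : ℕ) = 0 ∨ isRLMax π ⟨(sB π i : ℕ) - 1, lt_of_le_of_lt (Nat.sub_le _ _) (sB π i).isLt⟩ := by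
  by_contra hc
  push_neg at hc
  obtain ⟨h0, hrl⟩ := hc
  set t := sB π i with ht
  set t' : Fin (m+1) := ⟨(t : ℕ) - 1, lt_of_le_of_lt (Nat.sub_le _ _) t.isLt⟩ with ht'
  have ht'v : (t' : ℕ) = (t : ℕ) - 1 := rfl
  have htt' : t' < t := by simp only [Fin.lt_def]; omega
  have h1 : t ≤ bE π t' := by
    have h2 : t' < bE π t' := lt_of_le_of_ne (le_bE π t') (fun h => hrl (h ▸ rl_bE π t'))
    have : (t' : ℕ) + 1 ≤ (bE π t' : ℕ) := h2
    simp only [Fin.le_def]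
    omega
  have hb : bE π t' = bE π i := by
    rw [← bE_sB π i, ← ht]
    exact le_antisymm (bE_mono htt'.le) (bE_min h1 (rl_bE π t'))
  exact absurd (sB_min hb) (not_le.mpr htt')

theorem sB_unique {π : Equiv.Perm (Fin (m+1))} {i t : Fin (m+1)} (hi : isRLMax π i)
    (hti : t ≤ i) (hno : ∀ j, t ≤ j → j < i → ¬ isRLMax π j)
    (hpred : (t : ℕ) = 0 ∨ isRLMax π ⟨(t : ℕ) - 1, lt_of_le_of_lt (Nat.sub_le _ _) t.isLt⟩) :
    sB π i = t := by
  have hbi : bE π i = i := bE_eq_self hi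
  have hbt : bE π t = bE π i := by
    rw [hbi]
    rcases lt_or_ge (bE π t) i with h | h
    · exact absurd (rl_bE π t) (hno _ (le_bE π t) h)
    · exact le_antisymm (bE_min hti hi) h
  refine le_antisymm (sB_min hbt) ?_
  by_contra hc
  push_neg at hc
  have ht0 : (t : ℕ) ≠ 0 := by
    intro h
    exact absurd (show (sB π i : ℕ) = 0 by have := hc.le; rw [Fin.le_def] at this; omega) (by
      simp only [Fin.lt_def] at hc; omega)
  rcases hpred with h | hrl
  · exact ht0 h
  · set t' : Fin (m+1) := ⟨(t : ℕ) - 1, lt_of_le_of_lt (Nat.sub_le _ _) t.isLt⟩ with ht'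
    have h1 : sB π i ≤ t' := by
      simp only [Fin.le_def, ht']
      have := hc
      simp only [Fin.lt_def] at this
      omega
    have h2 : t' ≤ bE π i := by
      rw [hbi]
      exact le_trans (by simp only [Fin.le_def, ht']; omega) hti
    have := bE_of_between' h1 h2
    rw [bE_eq_self hrl, hbi] at this
    have : (t' : ℕ) = (i : ℕ) := congrArg Fin.val this
    simp only [ht'] at this
    have hti' : (t : ℕ) ≤ (i : ℕ) := hti
    omega

theorem not_rl_exists {π : Equiv.Perm (Fin (m+1))} {i : Fin (m+1)} (h : ¬ isRLMax π i) :
    ∃ j, i < j ∧ π i < π j := by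
  unfold isRLMax at h
  push_neg at h
  obtain ⟨j, hij, hj⟩ := h
  exact ⟨j, hij, lt_of_le_of_ne hj (fun he => (ne_of_gt hij) (π.injective he.symm ▸ rfl))⟩

theorem pi_le_bE (π : Equiv.Perm (Fin (m+1))) (i : Fin (m+1)) : π i ≤ π (bE π i) := by
  have key : ∀ k : ℕ, ∀ i : Fin (m+1), m - (i : ℕ) ≤ k → π i ≤ π (bE π i) := by
    intro k
    induction k with
    | zero =>
      intro i hk
      have : (i : ℕ) = m := by omega
      have : i = Fin.last m := Fin.ext this
      rw [this, bE_eq_self (rl_last π)]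
    | succ k ih =>
      intro i hk
      by_cases hi : isRLMax π i
      · rw [bE_eq_self hi]
      · obtain ⟨j, hij, hpij⟩ := not_rl_exists hi
        rcases le_or_gt j (bE π i) with h | h
        · have hbj : bE π j = bE π i := bE_of_between hij.le h
          have : π j ≤ π (bE π j) := ih j (by
            have h1 : (i : ℕ) < (j : ℕ) := hij
            omega)
          rw [hbj] at this
          exact le_of_lt (lt_of_lt_of_le hpij this)
        · exact le_of_lt (lt_trans hpij (rl_bE π i j h))
  exact key m i (by omega)

theorem pi_le_block {π : Equiv.Perm (Fin (m+1))} {i j : Fin (m+1)} (h1 : sB π i ≤ j)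
    (h2 : j ≤ bE π i) : π j ≤ π (bE π i) := by
  rw [← bE_of_between' h1 h2]
  exact pi_le_bE π j

theorem not_rl_lt_last {π : Equiv.Perm (Fin (m+1))} {i : Fin (m+1)} (h : ¬ isRLMax π i) :
    (i : ℕ) < m := by
  rcases lt_or_eq_of_le (Fin.le_last i) with hl | he
  · exact hl
  · exact absurd (he ▸ rl_last π) h

theorem lt_bE_of_not_rl {π : Equiv.Perm (Fin (m+1))} {i : Fin (m+1)} (h : ¬ isRLMax π i) :
    i < bE π i :=
  lt_of_le_of_ne (le_bE π i) (fun he => h (by rw [he]; exact rl_bE π i))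

/-- The block permutation on positions. -/
def fp (π : Equiv.Perm (Fin (m+1))) (i : Fin (m+1)) : Fin (m+1) :=
  if h : isRLMax π i then sB π i
  else ⟨(i : ℕ) + 1, by have := not_rl_lt_last h; omega⟩

theorem fp_rl {π : Equiv.Perm (Fin (m+1))} {i : Fin (m+1)} (h : isRLMax π i) :
    fp π i = sB π i := dif_pos h

theorem fp_not_rl {π : Equiv.Perm (Fin (m+1))} {i : Fin (m+1)} (h : ¬ isRLMax π i) :
    fp π i = ⟨(i : ℕ) + 1, by have := not_rl_lt_last h; omega⟩ := dif_neg h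

theorem fp_inj (π : Equiv.Perm (Fin (m+1))) : Function.Injective (fp π) := by
  have key : ∀ i j : Fin (m+1), isRLMax π i → ¬ isRLMax π j → fp π i ≠ fp π j := by
    intro i j hi hj h
    rw [fp_rl hi, fp_not_rl hj] at h
    rcases sB_sub_one (π := π) i with h0 | hrl
    · rw [h] at h0; simp at h0
    · rw [h] at hrl  -- hrl : isRLMax π ⟨j+1-1, _⟩
      have he : (⟨(j:ℕ) + 1 - 1, lt_of_le_of_lt (Nat.sub_le _ _) (Fin.mk ((j:ℕ)+1) (by have := not_rl_lt_last hj; omega)).isLt⟩ : Fin (m+1)) = j := Fin.ext (by simp)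
      rw [he] at hrl
      exact hj hrl
  intro i j h
  by_cases hi : isRLMax π i <;> by_cases hj : isRLMax π j
  · rw [fp_rl hi, fp_rl hj] at h
    have hb : bE π i = bE π j := by rw [← bE_sB π i, ← bE_sB π j, h]
    rwa [bE_eq_self hi, bE_eq_self hj] at hb
  · exact absurd h (key i j hi hj)
  · exact absurd h.symm (key j i hj hi)
  · rw [fp_not_rl hi, fp_not_rl hj] at h
    exact Fin.ext (by have := congrArg Fin.val h; simpa using this)

/-- The block permutation as an `Equiv.Perm`. -/
noncomputable def F (π : Equiv.Perm (Fin (m+1))) : Equiv.Perm (Fin (m+1)) :=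
  Equiv.ofBijective (fp π) (Finite.injective_iff_bijective.mp (fp_inj π))

theorem F_apply (π : Equiv.Perm (Fin (m+1))) (i : Fin (m+1)) : F π i = fp π i := rfl

theorem bE_fp (π : Equiv.Perm (Fin (m+1))) (i : Fin (m+1)) : bE π (fp π i) = bE π i := by
  unfold fp
  by_cases hi : isRLMax π i
  · simp only [hi, if_true]; exact bE_sB π i
  · simp only [hi, if_false]
    have h1 : i < bE π i := lt_bE_of_not_rl hi
    exact bE_of_between (by simp [Fin.le_def]) (by simp only [Fin.le_def]; exact h1)

theorem not_rl_mem_block {π : Equiv.Perm (Fin (m+1))} {i j : Fin (m+1)} (h1 : sB π i ≤ j)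
    (h2 : j < bE π i) : ¬ isRLMax π j := by
  intro hr
  have hb := bE_of_between' h1 h2.le
  rw [bE_eq_self hr] at hb
  exact absurd hb (ne_of_lt h2)

theorem F_pow_apply (π : Equiv.Perm (Fin (m+1))) (k : ℕ) (i : Fin (m+1)) :
    ((F π) ^ (k+1)) i = F π (((F π) ^ k) i) := by
  rw [pow_succ', Equiv.Perm.mul_apply]

theorem bE_F_pow (π : Equiv.Perm (Fin (m+1))) (k : ℕ) (i : Fin (m+1)) :
    bE π (((F π) ^ k) i) = bE π i := by
  induction k with
  | zero => simp
  | succ k ih => rw [F_pow_apply, F_apply, bE_fp, ih]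

theorem F_pow_sB (π : Equiv.Perm (Fin (m+1))) (i : Fin (m+1)) :
    ∀ k : ℕ, (h : (sB π i : ℕ) + k ≤ (bE π i : ℕ)) →
      ((F π) ^ k) (sB π i) = ⟨(sB π i : ℕ) + k, by have := (bE π i).isLt; omega⟩ := by
  intro k
  induction k with
  | zero => intro h; exact Fin.ext (by simp)
  | succ k ih =>
    intro h
    rw [F_pow_apply, ih (by omega)]
    set j : Fin (m+1) := ⟨(sB π i : ℕ) + k, by have := (bE π i).isLt; omega⟩ with hj
    have h1 : sB π i ≤ j := by simp [Fin.le_def, hj]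
    have h2 : j < bE π i := by simp only [Fin.lt_def, hj]; omega
    rw [F_apply, fp_not_rl (not_rl_mem_block h1 h2)]
    exact Fin.ext (by simp [hj]; omega)

theorem sameCycle_sB (π : Equiv.Perm (Fin (m+1))) (i : Fin (m+1)) :
    (F π).SameCycle (sB π i) i := by
  refine ⟨(((i : ℕ) - (sB π i : ℕ) : ℕ) : ℤ), ?_⟩
  rw [zpow_natCast, F_pow_sB π i _ (by
    have h1 : (sB π i : ℕ) ≤ (i : ℕ) := sB_le π i
    have h2 : (i : ℕ) ≤ (bE π i : ℕ) := le_bE π i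
    omega)]
  exact Fin.ext (by simp; have h1 : (sB π i : ℕ) ≤ (i : ℕ) := sB_le π i; omega)

theorem sameCycle_F_iff {π : Equiv.Perm (Fin (m+1))} {i j : Fin (m+1)} :
    (F π).SameCycle i j ↔ bE π i = bE π j := by
  constructor
  · intro h
    obtain ⟨k, _, hk⟩ := h.exists_pow_eq'
    rw [← hk, bE_F_pow]
  · intro h
    have hs : sB π j = sB π i := sB_eq_of_bE_eq (by rw [h])
    exact ((sameCycle_sB π i).symm.trans (hs ▸ sameCycle_sB π j))

theorem F_fix_iff {π : Equiv.Perm (Fin (m+1))} {i : Fin (m+1)} :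
    F π i = i ↔ (isRLMax π i ∧ sB π i = i) := by
  by_cases hi : isRLMax π i
  · rw [F_apply, fp_rl hi]
    simp [hi]
  · rw [F_apply, fp_not_rl hi]
    simp only [hi, false_and, iff_false]
    intro h
    have := congrArg Fin.val h
    simp at this

theorem sB_eq_self_iff {π : Equiv.Perm (Fin (m+1))} {i : Fin (m+1)} (hi : isRLMax π i) :
    sB π i = i ↔ ((i : ℕ) = 0 ∨
      isRLMax π ⟨(i : ℕ) - 1, lt_of_le_of_lt (Nat.sub_le _ _) i.isLt⟩) := by
  constructor
  · intro h
    have := sB_sub_one (π := π) i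
    rwa [h] at this
  · intro h
    refine le_antisymm (sB_le π i) ?_
    by_contra hc
    push_neg at hc
    rcases h with h0 | hrl
    · have : (i : ℕ) ≤ (sB π i : ℕ) := by omega
      exact absurd this (not_le.mpr hc)
    · set t' : Fin (m+1) := ⟨(i : ℕ) - 1, lt_of_le_of_lt (Nat.sub_le _ _) i.isLt⟩ with ht'
      have hc' : (sB π i : ℕ) < (i : ℕ) := hc
      have h1 : sB π i ≤ t' := by simp only [Fin.le_def, ht']; omega
      have h2 : t' ≤ bE π i := by
        rw [bE_eq_self hi]; simp only [Fin.le_def, ht']; omega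
      have hb := bE_of_between' h1 h2
      rw [bE_eq_self hrl, bE_eq_self hi] at hb
      have := congrArg Fin.val hb
      simp only [ht'] at this
      omega

open scoped Classical in
/-- the maximum of the cycle of `x`. -/
noncomputable def Mc (σ : Equiv.Perm (Fin (m+1))) (x : Fin (m+1)) : Fin (m+1) :=
  (Finset.univ.filter fun y => σ.SameCycle y x).max'
    ⟨x, by simp [Equiv.Perm.SameCycle.refl σ x]⟩

theorem Mc_sameCycle (σ : Equiv.Perm (Fin (m+1))) (x : Fin (m+1)) :
    σ.SameCycle (Mc σ x) x := by
  have h := Finset.max'_mem (α := Fin (m+1)) _ (⟨x, by simp [Equiv.Perm.SameCycle.refl σ x]⟩ :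
    (Finset.univ.filter fun y => σ.SameCycle y x).Nonempty)
  simpa [Mc] using h

theorem le_Mc {σ : Equiv.Perm (Fin (m+1))} {x y : Fin (m+1)} (h : σ.SameCycle y x) :
    y ≤ Mc σ x := Finset.le_max' _ _ (by simp [h])

theorem self_le_Mc (σ : Equiv.Perm (Fin (m+1))) (x : Fin (m+1)) : x ≤ Mc σ x :=
  le_Mc (Equiv.Perm.SameCycle.refl σ x)

theorem Mc_congr {σ : Equiv.Perm (Fin (m+1))} {x y : Fin (m+1)} (h : σ.SameCycle x y) :
    Mc σ x = Mc σ y := by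
  unfold Mc
  congr 1
  ext z
  simp only [Finset.mem_filter, Finset.mem_univ, true_and]
  exact ⟨fun hz => hz.trans h, fun hz => hz.trans h.symm⟩

theorem Mc_apply (σ : Equiv.Perm (Fin (m+1))) (x : Fin (m+1)) : Mc σ (σ x) = Mc σ x :=
  Mc_congr (⟨-1, by simp⟩ : σ.SameCycle (σ x) x)

theorem sameCycle_of_Mc_eq {σ : Equiv.Perm (Fin (m+1))} {x y : Fin (m+1)}
    (h : Mc σ x = Mc σ y) : σ.SameCycle x y :=
  (Mc_sameCycle σ x).symm.trans (h ▸ Mc_sameCycle σ y)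

/-- the start of the cycle of `x`: the successor of the maximum. -/
noncomputable def st (σ : Equiv.Perm (Fin (m+1))) (x : Fin (m+1)) : Fin (m+1) :=
  σ (Mc σ x)

theorem sameCycle_st (σ : Equiv.Perm (Fin (m+1))) (x : Fin (m+1)) :
    σ.SameCycle (st σ x) x := by
  have h1 : σ.SameCycle (Mc σ x) (st σ x) := ⟨1, by simp [st]⟩
  exact h1.symm.trans (Mc_sameCycle σ x)

theorem pc_exists (σ : Equiv.Perm (Fin (m+1))) (x : Fin (m+1)) :
    ∃ k : ℕ, (σ ^ k) (st σ x) = x := by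
  obtain ⟨k, _, hk⟩ := (sameCycle_st σ x).exists_pow_eq'
  exact ⟨k, hk⟩

/-- the position of `x` within its cycle. -/
noncomputable def pc (σ : Equiv.Perm (Fin (m+1))) (x : Fin (m+1)) : ℕ :=
  Nat.find (pc_exists σ x)

theorem pc_spec (σ : Equiv.Perm (Fin (m+1))) (x : Fin (m+1)) :
    (σ ^ (pc σ x)) (st σ x) = x := Nat.find_spec (pc_exists σ x)

theorem pc_min {σ : Equiv.Perm (Fin (m+1))} {x : Fin (m+1)} {k : ℕ} (h : k < pc σ x) :
    (σ ^ k) (st σ x) ≠ x := Nat.find_min (pc_exists σ x) h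

theorem st_apply (σ : Equiv.Perm (Fin (m+1))) (x : Fin (m+1)) : st σ (σ x) = st σ x := by
  unfold st; rw [Mc_apply]

theorem st_congr {σ : Equiv.Perm (Fin (m+1))} {x y : Fin (m+1)} (h : σ.SameCycle x y) :
    st σ x = st σ y := by unfold st; rw [Mc_congr h]

theorem pc_st (σ : Equiv.Perm (Fin (m+1))) (x : Fin (m+1)) : pc σ (st σ x) = 0 := by
  have h : st σ (st σ x) = st σ x := st_congr (sameCycle_st σ x)
  apply Nat.eq_zero_of_le_zero
  apply Nat.find_le
  rw [h]
  simp

theorem pc_succ {σ : Equiv.Perm (Fin (m+1))} {x : Fin (m+1)} (h : x ≠ Mc σ x) :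
    pc σ (σ x) = pc σ x + 1 := by
  have hst : st σ (σ x) = st σ x := st_apply σ x
  have hup : (σ ^ (pc σ x + 1)) (st σ (σ x)) = σ x := by
    rw [hst, pow_succ', Equiv.Perm.mul_apply, pc_spec]
  have hmin : ∀ k, k < pc σ x + 1 → (σ ^ k) (st σ (σ x)) ≠ σ x := by
    intro k hk hke
    rw [hst] at hke
    rcases k with _ | k
    · simp only [pow_zero, Equiv.Perm.coe_one, id_eq] at hke
      have h2 : σ (Mc σ x) = σ x := hke
      exact h (σ.injective h2).symm
    · rw [pow_succ', Equiv.Perm.mul_apply] at hke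
      exact pc_min (by omega) (σ.injective hke)
  exact (Nat.find_eq_iff (pc_exists σ (σ x))).mpr ⟨hup, fun k hk => hmin k hk⟩

theorem pc_le_pc_Mc (σ : Equiv.Perm (Fin (m+1))) (x : Fin (m+1)) :
    pc σ x ≤ pc σ (Mc σ x) := by
  have hst : st σ (Mc σ x) = st σ x := st_congr (Mc_sameCycle σ x)
  set pM := pc σ (Mc σ x) with hpM
  have hper : (σ ^ (pM + 1)) (st σ x) = st σ x := by
    have h1 : (σ ^ pM) (st σ x) = Mc σ x := by rw [← hst]; exact pc_spec σ (Mc σ x)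
    rw [pow_succ', Equiv.Perm.mul_apply, h1]
    rfl
  by_contra hc
  push_neg at hc
  have hx : (σ ^ (pc σ x - (pM + 1))) (st σ x) = x := by
    have h2 : pc σ x = (pc σ x - (pM + 1)) + (pM + 1) := by omega
    conv_rhs => rw [← pc_spec σ x]
    conv_rhs => rw [h2]
    rw [pow_add, Equiv.Perm.mul_apply, hper]
  exact pc_min (by omega) hx

theorem pc_Mc_le (σ : Equiv.Perm (Fin (m+1))) (x : Fin (m+1)) : pc σ (Mc σ x) ≤ m := by
  have hst : st σ (Mc σ x) = st σ x := st_congr (Mc_sameCycle σ x)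
  set pM := pc σ (Mc σ x) with hpM
  have hM : (σ ^ pM) (st σ x) = Mc σ x := by rw [← hst]; exact pc_spec σ (Mc σ x)
  have hkey : ∀ a b : ℕ, a < b → b ≤ pM → (σ ^ a) (st σ x) ≠ (σ ^ b) (st σ x) := by
    intro a b hab hb he
    have h1 : (σ ^ (pM - b + a)) (st σ x) = Mc σ x := by
      have h2 : (σ ^ (pM - b)) ((σ ^ b) (st σ x)) = Mc σ x := by
        rw [← Equiv.Perm.mul_apply, ← pow_add]
        have h3 : pM - b + b = pM := by omega
        rw [h3, hM]
      rw [← he] at h2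
      rw [pow_add, Equiv.Perm.mul_apply]
      exact h2
    have h4 := pc_min (σ := σ) (x := Mc σ x) (k := pM - b + a) (by omega)
    rw [hst] at h4
    exact h4 h1
  have hinj : Function.Injective (fun k : Fin (pM + 1) => (σ ^ (k : ℕ)) (st σ x)) := by
    intro a b hab
    simp only at hab
    by_contra hne
    have hv : (a : ℕ) ≠ (b : ℕ) := fun he => hne (Fin.ext he)
    rcases Nat.lt_or_ge (a : ℕ) (b : ℕ) with hlt | hge
    · exact hkey _ _ hlt (by omega) hab
    · exact hkey _ _ (by omega) (by omega) hab.symm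
  have := Fintype.card_le_of_injective _ hinj
  simpa using this

theorem pc_le (σ : Equiv.Perm (Fin (m+1))) (x : Fin (m+1)) : pc σ x ≤ m :=
  le_trans (pc_le_pc_Mc σ x) (pc_Mc_le σ x)

/-- the sort key. -/
noncomputable def key (σ : Equiv.Perm (Fin (m+1))) (x : Fin (m+1)) : ℕ :=
  (m - (Mc σ x : ℕ)) * (m + 1) + pc σ x

theorem lex_lt {A B r s n : ℕ} (hr : r < n) (hs : s < n) :
    A * n + r < B * n + s ↔ (A < B ∨ (A = B ∧ r < s)) := by
  rcases Nat.lt_trichotomy A B with h | h | h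
  · simp only [h, true_or, iff_true]
    calc A * n + r < A * n + n := by omega
      _ = (A + 1) * n := by ring
      _ ≤ B * n := Nat.mul_le_mul_right n h
      _ ≤ B * n + s := Nat.le_add_right _ _
  · subst h
    rw [Nat.add_lt_add_iff_left]
    simp [lt_irrefl]
  · have hgt : B * n + s < A * n + r :=
      calc B * n + s < B * n + n := by omega
        _ = (B + 1) * n := by ring
        _ ≤ A * n := Nat.mul_le_mul_right n h
        _ ≤ A * n + r := Nat.le_add_right _ _
    constructor
    · intro hlt; omega
    · rintro (h1 | ⟨h1, _⟩) <;> omega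

theorem key_lt_iff {σ : Equiv.Perm (Fin (m+1))} {x y : Fin (m+1)} :
    key σ x < key σ y ↔ (Mc σ y < Mc σ x ∨ (Mc σ x = Mc σ y ∧ pc σ x < pc σ y)) := by
  have hx := pc_le σ x
  have hy := pc_le σ y
  have hMx : (Mc σ x : ℕ) ≤ m := Nat.lt_succ_iff.mp (Mc σ x).isLt
  have hMy : (Mc σ y : ℕ) ≤ m := Nat.lt_succ_iff.mp (Mc σ y).isLt
  unfold key
  rw [lex_lt (by omega) (by omega), Fin.lt_def, Fin.ext_iff]
  constructor
  · rintro (h | ⟨h, h2⟩)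
    · left; omega
    · right; exact ⟨by omega, h2⟩
  · rintro (h | ⟨h, h2⟩)
    · left; omega
    · right; exact ⟨by omega, h2⟩

theorem key_eq_iff {σ : Equiv.Perm (Fin (m+1))} {x y : Fin (m+1)} :
    key σ x = key σ y ↔ (Mc σ x = Mc σ y ∧ pc σ x = pc σ y) := by
  constructor
  · intro h
    have h1 : ¬ key σ x < key σ y := by omega
    have h2 : ¬ key σ y < key σ x := by omega
    rw [key_lt_iff] at h1 h2
    push_neg at h1 h2
    rcases Nat.lt_trichotomy (Mc σ x : ℕ) (Mc σ y : ℕ) with hM | hM | hM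
    · exact absurd (Fin.lt_def.mpr hM) (not_lt.mpr h2.1)
    · have hMe : Mc σ x = Mc σ y := Fin.ext hM
      have := h1.2 hMe
      have := h2.2 hMe.symm
      exact ⟨hMe, by omega⟩
    · exact absurd (Fin.lt_def.mpr hM) (not_lt.mpr h1.1)
  · intro ⟨h1, h2⟩
    unfold key
    rw [h1, h2]

theorem key_inj (σ : Equiv.Perm (Fin (m+1))) : Function.Injective (key σ) := by
  intro x y h
  obtain ⟨h1, h2⟩ := key_eq_iff.mp h
  have hstx : st σ x = st σ y := by unfold st; rw [h1]
  rw [← pc_spec σ x, ← pc_spec σ y, h2, hstx]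

/-- the Foata-style bijection. -/
noncomputable def Phi (π : Equiv.Perm (Fin (m+1))) : Equiv.Perm (Fin (m+1)) :=
  π * F π * π⁻¹

theorem Phi_apply (π : Equiv.Perm (Fin (m+1))) (i : Fin (m+1)) :
    Phi π (π i) = π (fp π i) := by
  simp [Phi, Equiv.Perm.mul_apply, F_apply]

theorem Phi_pow_apply (π : Equiv.Perm (Fin (m+1))) (k : ℕ) (i : Fin (m+1)) :
    ((Phi π) ^ k) (π i) = π (((F π) ^ k) i) := by
  induction k with
  | zero => simp
  | succ k ih =>
    rw [pow_succ', pow_succ', Equiv.Perm.mul_apply, Equiv.Perm.mul_apply, ih, Phi_apply, F_apply]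

theorem sameCycle_Phi_iff {π : Equiv.Perm (Fin (m+1))} {i j : Fin (m+1)} :
    (Phi π).SameCycle (π i) (π j) ↔ bE π i = bE π j := by
  rw [Phi, Equiv.Perm.sameCycle_conj]
  simp only [Equiv.Perm.inv_def, Equiv.symm_apply_apply]
  exact sameCycle_F_iff

theorem Mc_Phi (π : Equiv.Perm (Fin (m+1))) (i : Fin (m+1)) :
    Mc (Phi π) (π i) = π (bE π i) := by
  apply le_antisymm
  · set x := Mc (Phi π) (π i) with hx
    have hsc : (Phi π).SameCycle x (π i) := Mc_sameCycle (Phi π) (π i)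
    have hjx : π (π⁻¹ x) = x := by simp
    rw [← hjx] at hsc
    have hb : bE π (π⁻¹ x) = bE π i := sameCycle_Phi_iff.mp hsc
    have h1 : sB π i ≤ π⁻¹ x := sB_min hb
    have h2 : (π⁻¹ x : Fin (m+1)) ≤ bE π i := hb ▸ le_bE π (π⁻¹ x)
    calc x = π (π⁻¹ x) := hjx.symm
      _ ≤ π (bE π i) := pi_le_block h1 h2
  · exact le_Mc (sameCycle_Phi_iff.mpr (bE_eq_self (rl_bE π i)))

theorem st_Phi (π : Equiv.Perm (Fin (m+1))) (i : Fin (m+1)) :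
    st (Phi π) (π i) = π (sB π i) := by
  unfold st
  rw [Mc_Phi, Phi_apply, fp_rl (rl_bE π i), sB_eq_of_bE_eq (bE_eq_self (rl_bE π i))]

theorem pc_Phi (π : Equiv.Perm (Fin (m+1))) (i : Fin (m+1)) :
    pc (Phi π) (π i) = (i : ℕ) - (sB π i : ℕ) := by
  have hs : (sB π i : ℕ) ≤ (i : ℕ) := sB_le π i
  have hb : (i : ℕ) ≤ (bE π i : ℕ) := le_bE π i
  apply (Nat.find_eq_iff (pc_exists (Phi π) (π i))).mpr
  constructor
  · rw [st_Phi, Phi_pow_apply, F_pow_sB π i _ (by omega)]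
    congr 1
    exact Fin.ext (by simp; omega)
  · intro k hk hke
    rw [st_Phi, Phi_pow_apply, F_pow_sB π i _ (by omega)] at hke
    have := π.injective hke
    have := congrArg Fin.val this
    simp at this
    omega

theorem key_Phi_strictMono (π : Equiv.Perm (Fin (m+1))) :
    StrictMono (fun i => key (Phi π) (π i)) := by
  intro i j hij
  simp only
  rw [key_lt_iff]
  rcases eq_or_ne (bE π i) (bE π j) with h | h
  · right
    constructor
    · rw [Mc_Phi, Mc_Phi, h]
    · rw [pc_Phi, pc_Phi]
      have hse : sB π j = sB π i := sB_eq_of_bE_eq h.symm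
      have h1 : (sB π i : ℕ) ≤ (i : ℕ) := sB_le π i
      have h2 : (i : ℕ) < (j : ℕ) := hij
      rw [hse]
      omega
  · left
    rw [Mc_Phi, Mc_Phi]
    have hbb : bE π i < bE π j := lt_of_le_of_ne (bE_mono hij.le) h
    exact rl_bE π i (bE π j) hbb

theorem exc_Phi (π : Equiv.Perm (Fin (m+1))) : exc (Phi π) = asc π := by
  unfold exc asc
  have hset : (Finset.univ.filter fun x => x < Phi π x) =
      (Finset.univ.filter fun i : Fin m => π i.castSucc < π i.succ).image
        (fun i => π i.castSucc) := by
    ext x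
    simp only [Finset.mem_filter, Finset.mem_univ, true_and, Finset.mem_image]
    constructor
    · intro hx
      obtain ⟨i, rfl⟩ : ∃ i, π i = x := ⟨π⁻¹ x, by simp⟩
      rw [Phi_apply] at hx
      have hrl : ¬ isRLMax π i := by
        intro hrl
        rw [fp_rl hrl] at hx
        have h2 : π (sB π i) ≤ π i := by
          have := pi_le_block (π := π) (i := i) le_rfl ((sB_le π i).trans (le_bE π i))
          rwa [bE_eq_self hrl] at this
        exact absurd hx (not_lt.mpr h2)
      have him : (i : ℕ) < m := not_rl_lt_last hrl
      rw [fp_not_rl hrl] at hx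
      have e1 : (⟨(i : ℕ), him⟩ : Fin m).castSucc = i := Fin.ext rfl
      have e2 : ((⟨(i : ℕ), him⟩ : Fin m).succ : Fin (m+1)) =
          ⟨(i : ℕ) + 1, by omega⟩ := Fin.ext rfl
      refine ⟨⟨(i : ℕ), him⟩, ?_, ?_⟩
      · rw [e1, e2]; exact hx
      · rw [e1]
    · rintro ⟨i, hi, rfl⟩
      have hrl : ¬ isRLMax π i.castSucc := by
        intro hrl
        exact absurd (hrl i.succ (by simp [Fin.lt_def])) (not_lt.mpr hi.le)
      rw [Phi_apply, fp_not_rl hrl]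
      have : (⟨(i.castSucc : ℕ) + 1, by have := not_rl_lt_last hrl; omega⟩ : Fin (m+1)) = i.succ :=
        Fin.ext (by simp)
      rw [this]
      exact hi
  rw [hset]
  exact Finset.card_image_of_injective _
    (fun a b hab => (Fin.castSucc_injective m) (π.injective hab))

theorem fixp_Phi (π : Equiv.Perm (Fin (m+1))) : fixp (Phi π) = bkone π := by
  unfold fixp bkone
  have hset : (Finset.univ.filter fun x => Phi π x = x) =
      (Finset.univ.filter fun i : Fin (m+1) => isRLMax π i ∧
        ((i : ℕ) = 0 ∨ isRLMax π ⟨(i : ℕ) - 1,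
          lt_of_le_of_lt (Nat.sub_le _ _) i.isLt⟩)).image (fun i => π i) := by
    ext x
    simp only [Finset.mem_filter, Finset.mem_univ, true_and, Finset.mem_image]
    constructor
    · intro hx
      obtain ⟨i, rfl⟩ : ∃ i, π i = x := ⟨π⁻¹ x, by simp⟩
      rw [Phi_apply] at hx
      have hfix : F π i = i := π.injective hx
      obtain ⟨hrl, hs⟩ := F_fix_iff.mp hfix
      exact ⟨i, ⟨hrl, (sB_eq_self_iff hrl).mp hs⟩, rfl⟩
    · rintro ⟨i, ⟨hrl, hor⟩, rfl⟩
      rw [Phi_apply, fp_rl hrl, (sB_eq_self_iff hrl).mpr hor]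
  rw [hset]
  exact Finset.card_image_of_injective _ π.injective

theorem cycleType_card_F (π : Equiv.Perm (Fin (m+1))) :
    (F π).cycleType.card =
      (Finset.univ.filter fun i => isRLMax π i ∧ sB π i ≠ i).card := by
  classical
  rw [Equiv.Perm.cycleType_def, Multiset.card_map]
  change (F π).cycleFactorsFinset.card = _
  symm
  apply Finset.card_bij (fun i _ => (F π).cycleOf i)
  · intro a ha
    simp only [Finset.mem_filter, Finset.mem_univ, true_and] at ha
    rw [Equiv.Perm.cycleOf_mem_cycleFactorsFinset_iff, Equiv.Perm.mem_support]
    intro hfix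
    exact ha.2 (F_fix_iff.mp hfix).2
  · intro a ha b hb hab
    simp only [Finset.mem_filter, Finset.mem_univ, true_and] at ha hb
    have hasup : a ∈ ((F π).cycleOf a).support := by
      rw [Equiv.Perm.mem_support_cycleOf_iff]
      refine ⟨Equiv.Perm.SameCycle.refl _ _, ?_⟩
      rw [Equiv.Perm.mem_support]
      intro hfix
      exact ha.2 (F_fix_iff.mp hfix).2
    rw [hab, Equiv.Perm.mem_support_cycleOf_iff] at hasup
    have hsc : (F π).SameCycle b a := hasup.1
    have hbe : bE π b = bE π a := sameCycle_F_iff.mp hsc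
    rw [bE_eq_self hb.1, bE_eq_self ha.1] at hbe
    exact hbe.symm
  · intro c hc
    obtain ⟨x, hx⟩ := (Equiv.Perm.mem_cycleFactorsFinset_iff.mp hc).1.nonempty_support
    have hxs : x ∈ (F π).support := by
      rw [Equiv.Perm.mem_support]
      intro hfix
      have hthis := (Equiv.Perm.mem_cycleFactorsFinset_iff.mp hc).2 x hx
      rw [hfix] at hthis
      exact (Equiv.Perm.mem_support.mp hx) hthis
    have hxfix : F π x ≠ x := Equiv.Perm.mem_support.mp hxs
    refine ⟨bE π x, ?_, ?_⟩
    · simp only [Finset.mem_filter, Finset.mem_univ, true_and]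
      refine ⟨rl_bE π x, ?_⟩
      intro hs
      have hs2 : sB π x = bE π x := by
        rw [← hs]
        exact (sB_eq_of_bE_eq (bE_eq_self (rl_bE π x))).symm
      have hx1 : (sB π x : ℕ) ≤ (x : ℕ) := sB_le π x
      have hx2 : (x : ℕ) ≤ (bE π x : ℕ) := le_bE π x
      have hx3 : (sB π x : ℕ) = (bE π x : ℕ) := congrArg Fin.val hs2
      have hxe : x = bE π x := Fin.ext (by omega)
      have hxe2 : sB π x = x := hs2.trans hxe.symm
      exact hxfix (F_fix_iff.mpr ⟨hxe ▸ rl_bE π x, hxe2⟩)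
    · have hsc : (F π).SameCycle (bE π x) x :=
        sameCycle_F_iff.mpr (bE_eq_self (rl_bE π x))
      rw [hsc.cycleOf_eq]
      exact (Equiv.Perm.cycle_is_cycleOf hx hc).symm

theorem cyc_Phi (π : Equiv.Perm (Fin (m+1))) : cyc (Phi π) = bk π := by
  unfold cyc bk
  have h1 : (Phi π).cycleType = (F π).cycleType := Equiv.Perm.cycleType_conj
  have h2 : fixp (Phi π) = bkone π := fixp_Phi π
  have h3 : bkone π = (Finset.univ.filter fun i => isRLMax π i ∧ sB π i = i).card := by
    unfold bkone
    congr 1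
    ext i
    simp only [Finset.mem_filter, Finset.mem_univ, true_and]
    exact and_congr_right fun hrl => (sB_eq_self_iff hrl).symm
  rw [h1, h2, h3, cycleType_card_F]
  have h4 : (Finset.univ.filter fun i => isRLMax π i ∧ sB π i ≠ i) =
      (Finset.univ.filter (isRLMax π)).filter (fun i => ¬ sB π i = i) := by
    rw [Finset.filter_filter]
  have h5 : (Finset.univ.filter fun i => isRLMax π i ∧ sB π i = i) =
      (Finset.univ.filter (isRLMax π)).filter (fun i => sB π i = i) := by
    rw [Finset.filter_filter]
  rw [h4, h5]
  have h6 := Finset.card_filter_add_card_filter_not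
    (s := Finset.univ.filter (isRLMax π)) (p := fun i => sB π i = i)
  have h7 : (Finset.univ.filter fun i => isRLMax π i) = Finset.univ.filter (isRLMax π) := rfl
  rw [h7]
  omega

theorem rl_i0 (π : Equiv.Perm (Fin (m+1))) : isRLMax π (π⁻¹ (Fin.last m)) := by
  intro j hj
  have hne : π j ≠ Fin.last m := by
    intro h
    have : j = π⁻¹ (Fin.last m) := by rw [← h]; simp
    exact absurd this (ne_of_gt hj)
  have : π (π⁻¹ (Fin.last m)) = Fin.last m := by simp
  rw [this]
  exact lt_of_le_of_ne (Fin.le_last _) hne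

theorem not_rl_lt_i0 {π : Equiv.Perm (Fin (m+1))} (hQ : π ∈ Qset m) {j : Fin (m+1)}
    (hj : j < π⁻¹ (Fin.last m)) : ¬ isRLMax π j := by
  rw [Qset, Finset.mem_filter] at hQ
  have hjv : (j : ℕ) < (π⁻¹ (Fin.last m) : ℕ) := hj
  have him : (π⁻¹ (Fin.last m) : ℕ) ≤ m := Nat.lt_succ_iff.mp (Fin.is_lt _)
  have hjm : (j : ℕ) < m := by omega
  have hasc := hQ.2 ⟨(j : ℕ), hjm⟩ (by rw [Fin.le_def]; simp only [Fin.val_succ]; omega)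
  have e1 : (⟨(j : ℕ), hjm⟩ : Fin m).castSucc = j := Fin.ext rfl
  have e2 : ((⟨(j : ℕ), hjm⟩ : Fin m).succ : Fin (m+1)) = ⟨(j : ℕ) + 1, by omega⟩ :=
    Fin.ext rfl
  rw [e1, e2] at hasc
  intro hrl
  exact absurd hasc (not_lt.mpr (hrl _ (by rw [Fin.lt_def]; simp)).le)

theorem bE_eq_i0 {π : Equiv.Perm (Fin (m+1))} (hQ : π ∈ Qset m) {j : Fin (m+1)}
    (hj : j ≤ π⁻¹ (Fin.last m)) : bE π j = π⁻¹ (Fin.last m) := by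
  refine le_antisymm (bE_min hj (rl_i0 π)) ?_
  by_contra hc
  push_neg at hc
  exact absurd (rl_bE π j) (not_rl_lt_i0 hQ hc)

theorem Phi_mem_Qhat {π : Equiv.Perm (Fin (m+1))} (hQ : π ∈ Qset m) : Phi π ∈ Qhat m := by
  rw [Qhat, Finset.mem_filter]
  refine ⟨Finset.mem_univ _, ?_⟩
  intro x hsc hne
  obtain ⟨i, rfl⟩ : ∃ i, π i = x := ⟨π⁻¹ x, by simp⟩
  have hlast : π (π⁻¹ (Fin.last m)) = Fin.last m := by simp
  rw [← hlast] at hsc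
  have hb : bE π i = bE π (π⁻¹ (Fin.last m)) := sameCycle_Phi_iff.mp hsc
  rw [bE_eq_i0 hQ le_rfl] at hb
  have hii0 : i < π⁻¹ (Fin.last m) :=
    lt_of_le_of_ne (hb ▸ le_bE π i) (fun h => hne (h ▸ hlast))
  have hrl : ¬ isRLMax π i := not_rl_lt_i0 hQ hii0
  rw [Phi_apply, fp_not_rl hrl]
  rw [Qset, Finset.mem_filter] at hQ
  have hjm : (i : ℕ) < m := not_rl_lt_last hrl
  have hasc := hQ.2 ⟨(i : ℕ), hjm⟩ (by
    rw [Fin.le_def]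
    simp only [Fin.val_succ]
    have : (i : ℕ) < (π⁻¹ (Fin.last m) : ℕ) := hii0
    omega)
  have e1 : (⟨(i : ℕ), hjm⟩ : Fin m).castSucc = i := Fin.ext rfl
  have e2 : ((⟨(i : ℕ), hjm⟩ : Fin m).succ : Fin (m+1)) = ⟨(i : ℕ) + 1, by omega⟩ :=
    Fin.ext rfl
  rw [e1, e2] at hasc
  exact hasc

theorem fcyc_Phi {π : Equiv.Perm (Fin (m+1))} (hQ : π ∈ Qset m) :
    fcyc (Phi π) = (π⁻¹ (Fin.last m) : ℕ) + 1 := by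
  unfold fcyc
  have hlast : π (π⁻¹ (Fin.last m)) = Fin.last m := by simp
  have hset : (Finset.univ.filter fun x => (Phi π).SameCycle x (Fin.last m)) =
      (Finset.univ.filter fun i => i ≤ π⁻¹ (Fin.last m)).image (fun i => π i) := by
    ext x
    simp only [Finset.mem_filter, Finset.mem_univ, true_and, Finset.mem_image]
    constructor
    · intro hsc
      obtain ⟨i, rfl⟩ : ∃ i, π i = x := ⟨π⁻¹ x, by simp⟩
      rw [← hlast] at hsc
      have hb : bE π i = bE π (π⁻¹ (Fin.last m)) := sameCycle_Phi_iff.mp hsc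
      rw [bE_eq_i0 hQ le_rfl] at hb
      exact ⟨i, hb ▸ le_bE π i, rfl⟩
    · rintro ⟨i, hi, rfl⟩
      rw [← hlast]
      exact sameCycle_Phi_iff.mpr (by rw [bE_eq_i0 hQ hi, bE_eq_i0 hQ le_rfl])
  rw [hset, Finset.card_image_of_injective _ π.injective]
  have : (Finset.univ.filter fun i => i ≤ π⁻¹ (Fin.last m)) = Finset.Iic (π⁻¹ (Fin.last m)) := by
    ext i; simp
  rw [this, Fin.card_Iic]

theorem fbk_eq {π : Equiv.Perm (Fin (m+1))} (hQ : π ∈ Qset m) :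
    fbk π = (π⁻¹ (Fin.last m) : ℕ) + 1 := by
  unfold fbk
  congr 1
  have : (Finset.univ.filter fun j : Fin (m+1) => ∀ i ≤ j, ¬ isRLMax π i) =
      Finset.Iio (π⁻¹ (Fin.last m)) := by
    ext j
    simp only [Finset.mem_filter, Finset.mem_univ, true_and, Finset.mem_Iio]
    constructor
    · intro h
      by_contra hc
      push_neg at hc
      exact h _ hc (rl_i0 π)
    · intro hj i hi
      exact not_rl_lt_i0 hQ (lt_of_le_of_lt hi hj)
  rw [this, Fin.card_Iio]

/-- the inverse map: sort by key. -/
noncomputable def Psi (σ : Equiv.Perm (Fin (m+1))) : Equiv.Perm (Fin (m+1)) :=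
  Tuple.sort (key σ)

theorem psi_strictMono (σ : Equiv.Perm (Fin (m+1))) :
    StrictMono (fun i => key σ (Psi σ i)) :=
  (Tuple.monotone_sort (key σ)).strictMono_of_injective
    ((key_inj σ).comp (Psi σ).injective)

theorem psi_lt_iff {σ : Equiv.Perm (Fin (m+1))} {i j : Fin (m+1)} :
    key σ (Psi σ i) < key σ (Psi σ j) ↔ i < j := (psi_strictMono σ).lt_iff_lt

theorem psi_le_iff {σ : Equiv.Perm (Fin (m+1))} {i j : Fin (m+1)} :
    key σ (Psi σ i) ≤ key σ (Psi σ j) ↔ i ≤ j := (psi_strictMono σ).le_iff_le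

theorem psi_succ {σ : Equiv.Perm (Fin (m+1))} {i : Fin (m+1)}
    (h : Psi σ i ≠ Mc σ (Psi σ i)) :
    ∃ hlt : (i : ℕ) < m, Psi σ ⟨(i : ℕ) + 1, by omega⟩ = σ (Psi σ i) := by
  have hkey : key σ (σ (Psi σ i)) = key σ (Psi σ i) + 1 := by
    unfold key
    rw [Mc_apply, pc_succ h]
    ring
  have hπj : Psi σ ((Psi σ)⁻¹ (σ (Psi σ i))) = σ (Psi σ i) := Equiv.apply_symm_apply _ _
  have hij : i < (Psi σ)⁻¹ (σ (Psi σ i)) := by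
    rw [← psi_lt_iff (σ := σ), hπj, hkey]
    omega
  have hlt : (i : ℕ) < m := by
    have h1 : (i : ℕ) < ((Psi σ)⁻¹ (σ (Psi σ i)) : ℕ) := hij
    have h2 : ((Psi σ)⁻¹ (σ (Psi σ i)) : ℕ) ≤ m := Nat.lt_succ_iff.mp (Fin.is_lt _)
    omega
  refine ⟨hlt, ?_⟩
  have hje : (Psi σ)⁻¹ (σ (Psi σ i)) = ⟨(i : ℕ) + 1, by omega⟩ := by
    by_contra hne
    have h1 : (i : ℕ) < ((Psi σ)⁻¹ (σ (Psi σ i)) : ℕ) := hij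
    have hlt2 : (i : ℕ) + 1 < ((Psi σ)⁻¹ (σ (Psi σ i)) : ℕ) := by
      have : ((Psi σ)⁻¹ (σ (Psi σ i)) : ℕ) ≠ (i : ℕ) + 1 := fun hh => hne (Fin.ext hh)
      omega
    have hk1 : key σ (Psi σ i) < key σ (Psi σ ⟨(i : ℕ) + 1, by omega⟩) :=
      psi_strictMono σ (show i < ⟨(i : ℕ) + 1, by omega⟩ by rw [Fin.lt_def]; simp)
    have hk2 : key σ (Psi σ ⟨(i : ℕ) + 1, by omega⟩) <
        key σ (Psi σ ((Psi σ)⁻¹ (σ (Psi σ i)))) :=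
      psi_strictMono σ (show _ < _ by rw [Fin.lt_def]; exact hlt2)
    rw [hπj, hkey] at hk2
    omega
  rw [← hje, hπj]

theorem psi_rl_iff {σ : Equiv.Perm (Fin (m+1))} {i : Fin (m+1)} :
    isRLMax (Psi σ) i ↔ Psi σ i = Mc σ (Psi σ i) := by
  constructor
  · intro hrl
    by_contra hne
    have hπj : Psi σ ((Psi σ)⁻¹ (Mc σ (Psi σ i))) = Mc σ (Psi σ i) :=
      Equiv.apply_symm_apply _ _
    have hMeq : Mc σ (Psi σ ((Psi σ)⁻¹ (Mc σ (Psi σ i)))) = Mc σ (Psi σ i) := by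
      rw [hπj]
      exact Mc_congr (Mc_sameCycle σ (Psi σ i))
    have hpc : pc σ (Psi σ i) < pc σ (Psi σ ((Psi σ)⁻¹ (Mc σ (Psi σ i)))) := by
      have hle : pc σ (Psi σ i) ≤ pc σ (Psi σ ((Psi σ)⁻¹ (Mc σ (Psi σ i)))) := by
        rw [hπj]
        exact pc_le_pc_Mc σ (Psi σ i)
      rcases lt_or_eq_of_le hle with h | h
      · exact h
      · exfalso
        have hk : key σ (Psi σ i) = key σ (Psi σ ((Psi σ)⁻¹ (Mc σ (Psi σ i)))) :=
          key_eq_iff.mpr ⟨hMeq.symm, h⟩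
        have := key_inj σ hk
        rw [hπj] at this
        exact hne this
    have hkey : key σ (Psi σ i) < key σ (Psi σ ((Psi σ)⁻¹ (Mc σ (Psi σ i)))) :=
      key_lt_iff.mpr (Or.inr ⟨hMeq.symm, hpc⟩)
    have hij : i < (Psi σ)⁻¹ (Mc σ (Psi σ i)) := psi_lt_iff.mp hkey
    have := hrl _ hij
    rw [hπj] at this
    exact absurd this (not_lt.mpr (self_le_Mc σ (Psi σ i)))
  · intro hM j hij
    have hkey : key σ (Psi σ i) < key σ (Psi σ j) := psi_lt_iff.mpr hij
    rcases key_lt_iff.mp hkey with h | ⟨h, hpc⟩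
    · calc Psi σ j ≤ Mc σ (Psi σ j) := self_le_Mc σ (Psi σ j)
        _ < Mc σ (Psi σ i) := h
        _ = Psi σ i := hM.symm
    · exfalso
      have h1 : pc σ (Psi σ j) ≤ pc σ (Psi σ i) := by
        have h2 : pc σ (Psi σ j) ≤ pc σ (Mc σ (Psi σ j)) := pc_le_pc_Mc σ (Psi σ j)
        rw [← h, ← hM] at h2
        exact h2
      omega

theorem Phi_Psi (σ : Equiv.Perm (Fin (m+1))) : Phi (Psi σ) = σ := by
  apply Equiv.ext
  intro x
  obtain ⟨i, rfl⟩ : ∃ i, Psi σ i = x := ⟨(Psi σ)⁻¹ x, by simp⟩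
  rw [Phi_apply]
  by_cases hrl : isRLMax (Psi σ) i
  · rw [fp_rl hrl]
    have hM : Psi σ i = Mc σ (Psi σ i) := psi_rl_iff.mp hrl
    have hsig : σ (Psi σ i) = st σ (Psi σ i) := by rw [st, ← hM]
    have hπj : Psi σ ((Psi σ)⁻¹ (σ (Psi σ i))) = σ (Psi σ i) := Equiv.apply_symm_apply _ _
    have hMj : Mc σ (Psi σ ((Psi σ)⁻¹ (σ (Psi σ i)))) = Mc σ (Psi σ i) := by
      rw [hπj, hsig]
      exact Mc_congr (sameCycle_st σ (Psi σ i))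
    have hpcj : pc σ (Psi σ ((Psi σ)⁻¹ (σ (Psi σ i)))) = 0 := by
      rw [hπj, hsig]
      exact pc_st σ (Psi σ i)
    have hji : (Psi σ)⁻¹ (σ (Psi σ i)) ≤ i := by
      rw [← psi_le_iff (σ := σ)]
      by_contra hc
      push_neg at hc
      rcases key_lt_iff.mp hc with h | ⟨h, hpc⟩
      · rw [hMj] at h
        exact lt_irrefl _ h
      · omega
    have hb : ∀ j', (Psi σ)⁻¹ (σ (Psi σ i)) ≤ j' → j' < i → ¬ isRLMax (Psi σ) j' := by
      intro j' h1 h2 hrlj'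
      have hk1 : key σ (Psi σ ((Psi σ)⁻¹ (σ (Psi σ i)))) ≤ key σ (Psi σ j') :=
        psi_le_iff.mpr h1
      have hk2 : key σ (Psi σ j') < key σ (Psi σ i) := psi_lt_iff.mpr h2
      have hMle : Mc σ (Psi σ j') ≤ Mc σ (Psi σ ((Psi σ)⁻¹ (σ (Psi σ i)))) := by
        by_contra hc
        push_neg at hc
        have := key_lt_iff.mpr (Or.inl hc)
        omega
      rcases key_lt_iff.mp hk2 with h | ⟨h, hpc⟩
      · rw [← hMj] at h
        exact absurd h (not_lt.mpr hMle)
      · have hMj' : Psi σ j' = Mc σ (Psi σ j') := psi_rl_iff.mp hrlj'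
        have heq : Psi σ j' = Psi σ i := by rw [hMj', h, ← hM]
        exact absurd ((Psi σ).injective heq) (ne_of_lt h2)
    have hc0 : ((Psi σ)⁻¹ (σ (Psi σ i)) : ℕ) = 0 ∨ isRLMax (Psi σ)
        ⟨((Psi σ)⁻¹ (σ (Psi σ i)) : ℕ) - 1,
          lt_of_le_of_lt (Nat.sub_le _ _) ((Psi σ)⁻¹ (σ (Psi σ i))).isLt⟩ := by
      by_cases hj0 : ((Psi σ)⁻¹ (σ (Psi σ i)) : ℕ) = 0
      · exact Or.inl hj0
      · right
        set j' : Fin (m+1) := ⟨((Psi σ)⁻¹ (σ (Psi σ i)) : ℕ) - 1,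
          lt_of_le_of_lt (Nat.sub_le _ _) ((Psi σ)⁻¹ (σ (Psi σ i))).isLt⟩ with hj'
        have hj'j : j' < (Psi σ)⁻¹ (σ (Psi σ i)) := by
          rw [Fin.lt_def]
          simp only [hj']
          omega
        have hk : key σ (Psi σ j') < key σ (Psi σ ((Psi σ)⁻¹ (σ (Psi σ i)))) :=
          psi_lt_iff.mpr hj'j
        have hMgt : Mc σ (Psi σ ((Psi σ)⁻¹ (σ (Psi σ i)))) < Mc σ (Psi σ j') := by
          rcases key_lt_iff.mp hk with h | ⟨h, hpc⟩
          · exact h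
          · omega
        by_contra hrlj'
        have hne : Psi σ j' ≠ Mc σ (Psi σ j') := fun he => hrlj' (psi_rl_iff.mpr he)
        have hπj'' : Psi σ ((Psi σ)⁻¹ (Mc σ (Psi σ j'))) = Mc σ (Psi σ j') :=
          Equiv.apply_symm_apply _ _
        have hMj'' : Mc σ (Psi σ ((Psi σ)⁻¹ (Mc σ (Psi σ j')))) = Mc σ (Psi σ j') := by
          rw [hπj'']
          exact Mc_congr (Mc_sameCycle σ (Psi σ j'))
        have hk1 : key σ (Psi σ j') < key σ (Psi σ ((Psi σ)⁻¹ (Mc σ (Psi σ j')))) := by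
          apply key_lt_iff.mpr
          right
          refine ⟨hMj''.symm, ?_⟩
          have hle : pc σ (Psi σ j') ≤ pc σ (Psi σ ((Psi σ)⁻¹ (Mc σ (Psi σ j')))) := by
            rw [hπj'']
            exact pc_le_pc_Mc σ (Psi σ j')
          rcases lt_or_eq_of_le hle with h | h
          · exact h
          · exfalso
            have hk3 : key σ (Psi σ j') = key σ (Psi σ ((Psi σ)⁻¹ (Mc σ (Psi σ j')))) :=
              key_eq_iff.mpr ⟨hMj''.symm, h⟩
            have := key_inj σ hk3
            rw [hπj''] at this
            exact hne this
        have hk2 : key σ (Psi σ ((Psi σ)⁻¹ (Mc σ (Psi σ j')))) <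
            key σ (Psi σ ((Psi σ)⁻¹ (σ (Psi σ i)))) := by
          apply key_lt_iff.mpr
          left
          rw [hMj'']
          exact hMgt
        have h1 : j' < (Psi σ)⁻¹ (Mc σ (Psi σ j')) := psi_lt_iff.mp hk1
        have h2 : (Psi σ)⁻¹ (Mc σ (Psi σ j')) < (Psi σ)⁻¹ (σ (Psi σ i)) := psi_lt_iff.mp hk2
        rw [Fin.lt_def] at h1 h2
        have hj'v : (j' : ℕ) = ((Psi σ)⁻¹ (σ (Psi σ i)) : ℕ) - 1 := rfl
        omega
    have hsB : sB (Psi σ) i = (Psi σ)⁻¹ (σ (Psi σ i)) := sB_unique hrl hji hb hc0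
    rw [hsB, hπj]
  · rw [fp_not_rl hrl]
    have hne : Psi σ i ≠ Mc σ (Psi σ i) := fun he => hrl (psi_rl_iff.mpr he)
    obtain ⟨hlt, hs⟩ := psi_succ hne
    exact hs
  
theorem Psi_Phi (π : Equiv.Perm (Fin (m+1))) : Psi (Phi π) = π := by
  have h1 : StrictMono (fun i => key (Phi π) (π i)) := key_Phi_strictMono π
  have h2 : StrictMono (fun i => key (Phi π) (Psi (Phi π) i)) := psi_strictMono (Phi π)
  have hr : Set.range (fun i => key (Phi π) (Psi (Phi π) i)) =
      Set.range (fun i => key (Phi π) (π i)) := by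
    have e1 : (fun i => key (Phi π) (Psi (Phi π) i)) = (key (Phi π)) ∘ (Psi (Phi π)) := rfl
    have e2 : (fun i => key (Phi π) (π i)) = (key (Phi π)) ∘ π := rfl
    rw [e1, e2, Set.range_comp, Set.range_comp,
      Set.range_eq_univ.mpr (Psi (Phi π)).surjective,
      Set.range_eq_univ.mpr π.surjective]
  haveI : WellFoundedLT (Fin (m+1)) := inferInstance
  have h3 : (fun i => key (Phi π) (Psi (Phi π) i)) = (fun i => key (Phi π) (π i)) :=
    (StrictMono.range_inj h2 h1).mp hr
  apply Equiv.ext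
  intro i
  exact key_inj (Phi π) (congrFun h3 i)

theorem Psi_mem_Qset {σ : Equiv.Perm (Fin (m+1))} (hσ : σ ∈ Qhat m) : Psi σ ∈ Qset m := by
  rw [Qset, Finset.mem_filter]
  refine ⟨Finset.mem_univ _, ?_⟩
  intro i hi
  have hπi0 : Psi σ ((Psi σ)⁻¹ (Fin.last m)) = Fin.last m := Equiv.apply_symm_apply _ _
  have hMlast : Mc σ (Fin.last m) = Fin.last m :=
    le_antisymm (Fin.le_last _) (self_le_Mc σ _)
  have hci : i.castSucc < (Psi σ)⁻¹ (Fin.last m) :=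
    lt_of_lt_of_le (Fin.castSucc_lt_succ (i := i)) hi
  have hkey : key σ (Psi σ i.castSucc) < key σ (Psi σ ((Psi σ)⁻¹ (Fin.last m))) :=
    psi_lt_iff.mpr hci
  have hkey0 : key σ (Psi σ ((Psi σ)⁻¹ (Fin.last m))) ≤ m := by
    rw [hπi0]
    unfold key
    rw [hMlast]
    simp only [Fin.val_last, Nat.sub_self, zero_mul, zero_add]
    exact pc_le σ _
  have hMc : Mc σ (Psi σ i.castSucc) = Fin.last m := by
    have h1 : key σ (Psi σ i.castSucc) < m + 1 := by omega
    unfold key at h1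
    have h2 : m - (Mc σ (Psi σ i.castSucc) : ℕ) = 0 := by
      by_contra hc
      have h4 : 1 ≤ m - (Mc σ (Psi σ i.castSucc) : ℕ) := by omega
      nlinarith [pc_le σ (Psi σ i.castSucc)]
    have h3 : (Mc σ (Psi σ i.castSucc) : ℕ) ≤ m := Nat.lt_succ_iff.mp (Fin.is_lt _)
    exact Fin.ext (by simp only [Fin.val_last]; omega)
  have hne0 : Psi σ i.castSucc ≠ Fin.last m := by
    intro h
    have : i.castSucc = (Psi σ)⁻¹ (Fin.last m) := by rw [← h]; simp
    exact absurd this (ne_of_lt hci)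
  have hne : Psi σ i.castSucc ≠ Mc σ (Psi σ i.castSucc) := by
    rw [hMc]
    exact hne0
  obtain ⟨hlt, hs⟩ := psi_succ hne
  have hsucc : (i.succ : Fin (m+1)) = ⟨(i.castSucc : ℕ) + 1, by omega⟩ := Fin.ext (by simp)
  rw [hsucc, hs]
  rw [Qhat, Finset.mem_filter] at hσ
  apply hσ.2
  · exact sameCycle_of_Mc_eq (by rw [hMc, hMlast])
  · exact hne0

end JDaux

theorem joint_distribution_eq {R : Type*} [CommRing R] (x y q p : R) (m : ℕ) :
    ∑ σ ∈ Qset m, x ^ asc σ * y ^ bkone σ * q ^ bk σ * p ^ fbk σ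
      = ∑ σ ∈ Qhat m, x ^ exc σ * y ^ fixp σ * q ^ cyc σ * p ^ fcyc σ := by
  apply Finset.sum_nbij' (i := JDaux.Phi) (j := JDaux.Psi)
  · intro π hπ
    exact JDaux.Phi_mem_Qhat hπ
  · intro σ hσ
    exact JDaux.Psi_mem_Qset hσ
  · intro π _
    exact JDaux.Psi_Phi π
  · intro σ _
    exact JDaux.Phi_Psi σ
  · intro π hπ
    rw [JDaux.exc_Phi, JDaux.fixp_Phi, JDaux.cyc_Phi, JDaux.fcyc_Phi hπ, JDaux.fbk_eq hπ]
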